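/- (Soundness of CIO.) Every formula of the language L_D that is derivable in the calculus CIO is valid in every causal deontic model. -/

import Mathlib

/-- A signature `(U, V, R)`: finite set of exogenous variables `U`, finite set of
endogenous variables `V` (disjoint from `U`, modelled by a sum type), and for each
variable a finite nonempty range of values. -/
structure Signature where
  U : Type
  V : Type
  R : U ⊕ V → Type
  fintypeU : Fintype U
  fintypeV : Fintype V
  decEqU : DecidableEq U
  decEqV : DecidableEq V
  fintypeR : ∀ X, Fintype (R X)
  nonemptyR : ∀ X, Nonempty (R X)
  decEqR : ∀ X, DecidableEq (R X)

attribute [instance] Signature.fintypeU Signature.fintypeV Signature.decEqU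
  Signature.decEqV Signature.fintypeR Signature.nonemptyR Signature.decEqR

/-- An assignment of values to all the variables. -/
abbrev Assignment (S : Signature) : Type := ∀ X : S.U ⊕ S.V, S.R X

/-- An exogenous setting: an assignment of values to all exogenous variables. -/
abbrev ExoSetting (S : Signature) : Type := ∀ X : S.U, S.R (Sum.inl X)

/-- An assignment of values to all variables except `X` (i.e. `A^{-X}`). -/
abbrev CoAssignment (S : Signature) (X : S.U ⊕ S.V) : Type :=
  ∀ Y : S.U ⊕ S.V, Y ≠ X → S.R Y

/-- The restriction `A^{-X}` of an assignment. -/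
def Assignment.minus {S : Signature} (A : Assignment S) (X : S.U ⊕ S.V) :
    CoAssignment S X := fun Y _ => A Y

/-- A set of structural functions: for each endogenous variable `X`, a function
giving the value of `X` from the values of all the other variables. -/
abbrev StructFns (S : Signature) : Type :=
  ∀ X : S.V, CoAssignment S (Sum.inr X) → S.R (Sum.inr X)

/-- `A` complies with `F` iff `A(X) = f_X(A^{-X})` for every endogenous `X`. -/
def Complies (S : Signature) (F : StructFns S) (A : Assignment S) : Prop :=
  ∀ X : S.V, A (Sum.inr X) = F X (A.minus (Sum.inr X))

/-- `F` is recursive (acyclic): there is a strict total order on the variables such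
that each `f_X` does not depend on the values of variables strictly above `X`. -/
def Recursive (S : Signature) (F : StructFns S) : Prop :=
  ∃ lt : (S.U ⊕ S.V) → (S.U ⊕ S.V) → Prop,
    IsStrictTotalOrder (S.U ⊕ S.V) lt ∧
    ∀ X : S.V, ∀ B B' : CoAssignment S (Sum.inr X),
      (∀ Y (hne : Y ≠ Sum.inr X), lt Y (Sum.inr X) → B Y hne = B' Y hne) →
      F X B = F X B'

/-- An intervention tuple `X⃗ = x⃗`: a list of endogenous variables with values. -/
abbrev Ivn (S : Signature) : Type := List ((X : S.V) × S.R (Sum.inr X))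

/-- The variables of an intervention tuple. -/
def Ivn.fsts {S : Signature} (l : Ivn S) : List S.V := l.map Sigma.fst

/-- The variables in the tuple are pairwise distinct. -/
def Ivn.Distinct {S : Signature} (l : Ivn S) : Prop := (l.map Sigma.fst).Nodup

/-- The intervened structural functions `F_{X⃗ = x⃗}`: each `f_{X_i}` is replaced by
the constant function returning `x_i`; the other functions are unchanged. -/
noncomputable def applyIvn (S : Signature) (F : StructFns S) (l : Ivn S) : StructFns S :=
  fun X B =>
    if h : ∃ x : S.R (Sum.inr X), (⟨X, x⟩ : (Y : S.V) × S.R (Sum.inr Y)) ∈ l then h.choose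
    else F X B

/-- Formulas of the language `L_D`:
atoms `X = x`, negation, conjunction, intervention formulas `[X⃗=x⃗]φ`,
priority formulas `X=x ≺ Y=y`, and context formulas `φ^u`. -/
inductive Formula (S : Signature) : Type where
  | atom (X : S.U ⊕ S.V) (x : S.R X) : Formula S
  | neg (φ : Formula S) : Formula S
  | and (φ ψ : Formula S) : Formula S
  | intervene (l : Ivn S) (φ : Formula S) : Formula S
  | prec (X : S.U ⊕ S.V) (x : S.R X) (Y : S.U ⊕ S.V) (y : S.R Y) : Formula S
  | ctx (u : ExoSetting S) (φ : Formula S) : Formula S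

def Formula.imp {S : Signature} (φ ψ : Formula S) : Formula S := .neg (.and φ (.neg ψ))

def Formula.or {S : Signature} (φ ψ : Formula S) : Formula S := .neg (.and (.neg φ) (.neg ψ))

def Formula.iffF {S : Signature} (φ ψ : Formula S) : Formula S := .and (φ.imp ψ) (ψ.imp φ)

/-- Atoms `X = x`. -/
abbrev SAtom (S : Signature) : Type := (X : S.U ⊕ S.V) × S.R X

/-- A priority structure `P = (Φ, ≪)`: a set of atoms together with a
priority relation among atoms. -/
structure Priority (S : Signature) where
  dom : Set (SAtom S)
  lt : SAtom S → SAtom S → Prop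

/-- The priority relation is a strict partial order (asymmetric and transitive). -/
def Priority.Strict {S : Signature} (P : Priority S) : Prop :=
  (∀ a b, P.lt a b → ¬ P.lt b a) ∧ (∀ a b c, P.lt a b → P.lt b c → P.lt a c)

open Classical in
/-- The unique assignment complying with `F` whose values on the exogenous
variables are given by `u` (when `F` is recursive it exists and is unique). -/
noncomputable def solve (S : Signature) (F : StructFns S) (u : ExoSetting S) : Assignment S :=
  if h : ∃ A : Assignment S, Complies S F A ∧ ∀ X : S.U, A (Sum.inl X) = u X then h.choose
  else fun X => Classical.arbitrary (S.R X)

/-- Truth of a formula at structural functions `F`, priority `P` and actual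
assignment `A`. -/
def Sat (S : Signature) : StructFns S → Priority S → Assignment S → Formula S → Prop
  | _, _, A, .atom X x => A X = x
  | F, P, A, .neg φ => ¬ Sat S F P A φ
  | F, P, A, .and φ ψ => Sat S F P A φ ∧ Sat S F P A ψ
  | F, P, A, .intervene l φ =>
      Sat S (applyIvn S F l) P (solve S (applyIvn S F l) (fun X => A (Sum.inl X))) φ
  | _, P, _, .prec X x Y y => P.lt ⟨X, x⟩ ⟨Y, y⟩
  | F, P, _, .ctx u φ => Sat S F P (solve S F u) φ

/-- A causal deontic model: recursive structural functions, a priority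
structure which is a strict partial order, and an actual assignment complying
with the structural functions. -/
structure CDModel (S : Signature) where
  F : StructFns S
  P : Priority S
  A : Assignment S
  recF : Recursive S F
  strictP : P.Strict
  compliesA : Complies S F A

/-- Truth in a causal deontic model. -/
def CDModel.Sat {S : Signature} (M : CDModel S) (φ : Formula S) : Prop :=
  _root_.Sat S M.F M.P M.A φ

/-- A falsum, available whenever the signature has at least one variable. -/
noncomputable def botF (S : Signature) (h : Nonempty (S.U ⊕ S.V)) : Formula S :=
  Formula.and (.atom (@Classical.arbitrary _ h) (Classical.arbitrary _))
    (.neg (.atom (@Classical.arbitrary _ h) (Classical.arbitrary _)))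

/-- A verum. -/
noncomputable def topF (S : Signature) (h : Nonempty (S.U ⊕ S.V)) : Formula S :=
  .neg (botF S h)

/-- Finite conjunction. -/
noncomputable def bigAnd (S : Signature) (h : Nonempty (S.U ⊕ S.V))
    (L : List (Formula S)) : Formula S :=
  L.foldr Formula.and (topF S h)

/-- Finite disjunction. -/
noncomputable def bigOr (S : Signature) (h : Nonempty (S.U ⊕ S.V))
    (L : List (Formula S)) : Formula S :=
  L.foldr Formula.or (botF S h)

/-- `φ` is (a substitution instance of) a propositional tautology: it is true under
every Boolean valuation of formulas which respects negation and conjunction. -/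
def IsTaut (S : Signature) (φ : Formula S) : Prop :=
  ∀ v : Formula S → Bool,
    (∀ ψ, v (.neg ψ) = !v ψ) →
    (∀ ψ χ, v (.and ψ χ) = (v ψ && v χ)) →
    v φ = true

/-- The formula `U⃗ = u`: the conjunction of the atoms stating that each exogenous
variable takes its value under `u`. -/
noncomputable def exoConj (S : Signature) (h : Nonempty (S.U ⊕ S.V))
    (u : ExoSetting S) : Formula S :=
  bigAnd S h ((Finset.univ : Finset S.U).toList.map fun X => Formula.atom (Sum.inl X) (u X))

/-- The merged intervention `X⃗'=x⃗', Y⃗=y⃗` where `X⃗'=x⃗'` is the restriction of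
`X⃗=x⃗` to the variables of `X⃗` not occurring in `Y⃗`. -/
def mergeIvn {S : Signature} (l₁ l₂ : Ivn S) : Ivn S :=
  (l₁.filter fun p => decide (p.1 ∉ Ivn.fsts l₂)) ++ l₂

/-- The conjuncts `[X⃗=x⃗,Y=y]Z=z' ∧ [X⃗=x⃗,Y=y']Z=z` (over all tuples `X⃗=x⃗` of
distinct endogenous variables excluding `Y` and `Z`, and all values `y ≠ y'`,
`z ≠ z'`) whose disjunction is the causal-influence abbreviation `Y ⇝ Z`. -/
def InfluenceConjuncts (S : Signature) (Y Z : S.V) : Set (Formula S) :=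
  { φ | ∃ (l : Ivn S) (y y' : S.R (Sum.inr Y)) (z z' : S.R (Sum.inr Z)),
      Ivn.Distinct (l ++ [⟨Y, y⟩]) ∧ Z ∉ Ivn.fsts l ∧ Z ≠ Y ∧ y ≠ y' ∧ z ≠ z' ∧
      φ = Formula.and (.intervene (l ++ [⟨Y, y⟩]) (.atom (Sum.inr Z) z'))
            (.intervene (l ++ [⟨Y, y'⟩]) (.atom (Sum.inr Z) z)) }

/-- The Hilbert-style calculus CIO. -/
inductive Deriv (S : Signature) : Formula S → Prop where
  /-- all propositional tautologies -/
  | taut (φ : Formula S) : IsTaut S φ → Deriv S φ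
  /-- modus ponens -/
  | mp (φ ψ : Formula S) : Deriv S (φ.imp ψ) → Deriv S φ → Deriv S ψ
  /-- necessitation for interventions -/
  | necI (l : Ivn S) (hl : Ivn.Distinct l) (φ : Formula S) :
      Deriv S φ → Deriv S (.intervene l φ)
  /-- necessitation for contexts -/
  | necC (u : ExoSetting S) (φ : Formula S) : Deriv S φ → Deriv S (.ctx u φ)
  /-- A1 -/
  | ax1 (l : Ivn S) (hl : Ivn.Distinct l) (Y : S.V) (y y' : S.R (Sum.inr Y)) (h : y ≠ y') :
      Deriv S ((Formula.intervene l (.atom (Sum.inr Y) y)).imp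
        (.neg (.intervene l (.atom (Sum.inr Y) y'))))
  /-- A2 -/
  | ax2 (l : Ivn S) (hl : Ivn.Distinct l) (Y : S.V) :
      Deriv S (bigOr S ⟨Sum.inr Y⟩
        (((Finset.univ : Finset (S.R (Sum.inr Y))).toList).map
          fun y => Formula.intervene l (.atom (Sum.inr Y) y)))
  /-- A3 -/
  | ax3 (l : Ivn S) (hl : Ivn.Distinct l) (Y : S.V) (hY : Y ∉ Ivn.fsts l)
      (y : S.R (Sum.inr Y)) (Z : S.V) (hZ : Z ∉ Ivn.fsts l) (hZY : Z ≠ Y)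
      (z : S.R (Sum.inr Z)) :
      Deriv S ((Formula.and (.intervene l (.atom (Sum.inr Y) y))
          (.intervene l (.atom (Sum.inr Z) z))).imp
        (.intervene (l ++ [⟨Y, y⟩]) (.atom (Sum.inr Z) z)))
  /-- A4 -/
  | ax4 (l : Ivn S) (Y : S.V) (y : S.R (Sum.inr Y)) (h : Ivn.Distinct (l ++ [⟨Y, y⟩])) :
      Deriv S (.intervene (l ++ [⟨Y, y⟩]) (.atom (Sum.inr Y) y))
  /-- A5: `(X_0 ⇝ X_1 ∧ ⋯ ∧ X_{k-1} ⇝ X_k) → ¬(X_k ⇝ X_0)` for pairwise distinct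
  endogenous variables, where each `X_i ⇝ X_j` is (any enumeration of) the
  disjunction of its influence conjuncts. -/
  | ax5 (k : ℕ) (X : Fin (k + 1) → S.V) (hinj : Function.Injective X)
      (L : Fin (k + 1) → List (Formula S))
      (hL : ∀ i : Fin k, ∀ ψ : Formula S,
        ψ ∈ L i.castSucc ↔ ψ ∈ InfluenceConjuncts S (X i.castSucc) (X i.succ))
      (hLast : ∀ ψ : Formula S,
        ψ ∈ L (Fin.last k) ↔ ψ ∈ InfluenceConjuncts S (X (Fin.last k)) (X 0)) :
      Deriv S ((bigAnd S ⟨Sum.inr (X 0)⟩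
          (List.ofFn fun i : Fin k => bigOr S ⟨Sum.inr (X 0)⟩ (L i.castSucc))).imp
        (.neg (bigOr S ⟨Sum.inr (X 0)⟩ (L (Fin.last k)))))
  /-- A_¬ -/
  | axNeg (l : Ivn S) (hl : Ivn.Distinct l) (φ : Formula S) :
      Deriv S ((Formula.intervene l (.neg φ)).iffF (.neg (.intervene l φ)))
  /-- A_∧ -/
  | axAnd (l : Ivn S) (hl : Ivn.Distinct l) (φ ψ : Formula S) :
      Deriv S ((Formula.intervene l (.and φ ψ)).iffF
        (.and (.intervene l φ) (.intervene l ψ)))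
  /-- A_[][] -/
  | axComp (l₁ l₂ : Ivn S) (h₁ : Ivn.Distinct l₁) (h₂ : Ivn.Distinct l₂) (φ : Formula S) :
      Deriv S ((Formula.intervene l₁ (.intervene l₂ φ)).iffF
        (.intervene (mergeIvn l₁ l₂) φ))
  /-- Asym -/
  | axAsym (X : S.U ⊕ S.V) (x : S.R X) (Y : S.U ⊕ S.V) (y : S.R Y) :
      Deriv S ((Formula.prec X x Y y).imp (.neg (.prec Y y X x)))
  /-- Trans -/
  | axTrans (X : S.U ⊕ S.V) (x : S.R X) (Y : S.U ⊕ S.V) (y : S.R Y)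
      (Z : S.U ⊕ S.V) (z : S.R Z) :
      Deriv S ((Formula.and (.prec X x Y y) (.prec Y y Z z)).imp (.prec X x Z z))
  /-- G_∧ -/
  | gAnd (u : ExoSetting S) (φ ψ : Formula S) :
      Deriv S ((Formula.ctx u (.and φ ψ)).iffF (.and (.ctx u φ) (.ctx u ψ)))
  /-- G_¬ -/
  | gNeg (u : ExoSetting S) (φ : Formula S) :
      Deriv S ((Formula.neg (.ctx u φ)).iffF (.ctx u (.neg φ)))
  /-- G_u -/
  | gCtx (u u' : ExoSetting S) (φ : Formula S) :
      Deriv S ((Formula.ctx u' (.ctx u φ)).iffF (.ctx u φ))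
  /-- G_[] -/
  | gInt (u : ExoSetting S) (l : Ivn S) (hl : Ivn.Distinct l) (φ : Formula S) :
      Deriv S ((Formula.ctx u (.intervene l φ)).iffF (.intervene l (.ctx u φ)))
  /-- Self -/
  | selfAx (h : Nonempty (S.U ⊕ S.V)) (u : ExoSetting S) :
      Deriv S (.ctx u (exoConj S h u))
  /-- Incl -/
  | inclAx (h : Nonempty (S.U ⊕ S.V)) (u : ExoSetting S) (φ : Formula S) :
      Deriv S ((Formula.and (exoConj S h u) φ).imp (.ctx u φ))

/-- Derivability from a set of premises. -/
inductive DerivFrom (S : Signature) (Γ : Set (Formula S)) : Formula S → Prop where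
  | mem (φ : Formula S) : φ ∈ Γ → DerivFrom S Γ φ
  | thm (φ : Formula S) : Deriv S φ → DerivFrom S Γ φ
  | mp (φ ψ : Formula S) : DerivFrom S Γ (φ.imp ψ) → DerivFrom S Γ φ → DerivFrom S Γ ψ

/-- `Γ` is CIO-consistent. -/
def Consistent (S : Signature) (Γ : Set (Formula S)) : Prop :=
  ¬ ∃ φ : Formula S, DerivFrom S Γ φ ∧ DerivFrom S Γ (.neg φ)

/-- `Γ` is maximal CIO-consistent: consistent, and no proper superset is consistent. -/
def MCS (S : Signature) (Γ : Set (Formula S)) : Prop :=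
  Consistent S Γ ∧ ∀ Δ : Set (Formula S), Γ ⊆ Δ → Consistent S Δ → Δ = Γ

section Soundness

variable {S : Signature}

lemma mem_fsts_iff {l : Ivn S} {X : S.V} :
    X ∈ Ivn.fsts l ↔ ∃ x, (⟨X, x⟩ : (Y : S.V) × S.R (Sum.inr Y)) ∈ l := by
  simp only [Ivn.fsts, List.mem_map]
  constructor
  · rintro ⟨⟨Y, y⟩, hmem, rfl⟩; exact ⟨y, hmem⟩
  · rintro ⟨x, hx⟩; exact ⟨⟨X, x⟩, hx, rfl⟩

lemma distinct_val {l : Ivn S} (hl : Ivn.Distinct l) {X : S.V}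
    {x x' : S.R (Sum.inr X)} (h : (⟨X, x⟩ : (Y : S.V) × S.R (Sum.inr Y)) ∈ l)
    (h' : (⟨X, x'⟩ : (Y : S.V) × S.R (Sum.inr Y)) ∈ l) : x = x' := by
  induction l with
  | nil => cases h
  | cons p t ih =>
    have hl' : p.1 ∉ t.map Sigma.fst ∧ (t.map Sigma.fst).Nodup := by
      simpa [Ivn.Distinct] using hl
    rcases List.mem_cons.1 h with he | h
    · rcases List.mem_cons.1 h' with he' | h'
      · rw [← he] at he'; exact (Sigma.mk.inj_iff.1 he').2.symm.eq
      · refine absurd ?_ hl'.1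
        rw [← he]
        exact List.mem_map_of_mem (a := (⟨X, x'⟩ : (Y : S.V) × S.R (Sum.inr Y))) (f := Sigma.fst) h'
    · rcases List.mem_cons.1 h' with he' | h'
      · refine absurd ?_ hl'.1
        rw [← he']
        exact List.mem_map_of_mem (a := (⟨X, x⟩ : (Y : S.V) × S.R (Sum.inr Y))) (f := Sigma.fst) h
      · exact ih hl'.2 h h'

lemma applyIvn_mem (F : StructFns S) {l : Ivn S} (hl : Ivn.Distinct l) {X : S.V}
    {x : S.R (Sum.inr X)} (hx : (⟨X, x⟩ : (Y : S.V) × S.R (Sum.inr Y)) ∈ l)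
    (B : CoAssignment S (Sum.inr X)) : applyIvn S F l X B = x := by
  unfold applyIvn
  rw [dif_pos ⟨x, hx⟩]
  exact distinct_val hl (⟨x, hx⟩ : ∃ y, (⟨X, y⟩ : (Y : S.V) × S.R (Sum.inr Y)) ∈ l).choose_spec hx

lemma applyIvn_not_mem (F : StructFns S) {l : Ivn S} {X : S.V}
    (hX : X ∉ Ivn.fsts l) (B : CoAssignment S (Sum.inr X)) : applyIvn S F l X B = F X B := by
  unfold applyIvn
  rw [dif_neg]
  rintro ⟨x, hx⟩
  exact hX (mem_fsts_iff.2 ⟨x, hx⟩)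

lemma recursive_applyIvn {F : StructFns S} (hF : Recursive S F) (l : Ivn S) :
    Recursive S (applyIvn S F l) := by
  obtain ⟨lt, hsto, hdep⟩ := hF
  refine ⟨lt, hsto, ?_⟩
  intro X B B' hBB
  unfold applyIvn
  split
  · rfl
  · exact hdep X B B' hBB

/-- Build a solution of a recursive system by well-founded recursion. -/
noncomputable def endoSol (F : StructFns S) (lt : (S.U ⊕ S.V) → (S.U ⊕ S.V) → Prop)
    (wf : WellFounded lt) (u : ExoSetting S) : ∀ V : S.V, S.R (Sum.inr V) :=
  (InvImage.wf (fun V : S.V => Sum.inr V) wf).fix (C := fun V => S.R (Sum.inr V))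
    (fun V rec =>
      F V (fun Y _ =>
        match Y with
        | Sum.inl a => u a
        | Sum.inr W =>
          @dite _ (lt (Sum.inr W) (Sum.inr V)) (Classical.propDecidable _)
            (fun h => rec W h) (fun _ => Classical.arbitrary _)))

noncomputable def buildSol (F : StructFns S) (lt : (S.U ⊕ S.V) → (S.U ⊕ S.V) → Prop)
    (wf : WellFounded lt) (u : ExoSetting S) : Assignment S := fun X =>
  match X with
  | Sum.inl a => u a
  | Sum.inr V => endoSol F lt wf u V

lemma buildSol_complies (F : StructFns S) (lt : (S.U ⊕ S.V) → (S.U ⊕ S.V) → Prop)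
    (hsto : IsStrictTotalOrder (S.U ⊕ S.V) lt)
    (hdep : ∀ X : S.V, ∀ B B' : CoAssignment S (Sum.inr X),
      (∀ Y (hne : Y ≠ Sum.inr X), lt Y (Sum.inr X) → B Y hne = B' Y hne) → F X B = F X B')
    (wf : WellFounded lt) (u : ExoSetting S) :
    Complies S F (buildSol F lt wf u) := by
  intro X
  show endoSol F lt wf u X = _
  rw [endoSol, WellFounded.fix_eq]
  apply hdep
  intro Y hne hlt
  cases Y with
  | inl a => rfl
  | inr W =>
    show @dite _ (lt (Sum.inr W) (Sum.inr X)) (Classical.propDecidable _) _ _ = _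
    rw [dif_pos hlt]
    rfl

lemma complies_unique {F : StructFns S} (hF : Recursive S F) {A A' : Assignment S}
    (hA : Complies S F A) (hA' : Complies S F A')
    (hexo : ∀ X : S.U, A (Sum.inl X) = A' (Sum.inl X)) : A = A' := by
  obtain ⟨lt, hsto, hdep⟩ := hF
  haveI := hsto.toIsTrans
  haveI := hsto.toIrrefl
  have wf : WellFounded lt := Finite.wellFounded_of_trans_of_irrefl lt
  funext X
  induction X using WellFounded.induction wf with
  | _ X ih =>
    cases X with
    | inl a => exact hexo a
    | inr V =>
      rw [hA V, hA' V]
      exact hdep V _ _ fun Y hne hlt => ih Y hlt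

lemma solve_exists {F : StructFns S} (hF : Recursive S F) (u : ExoSetting S) :
    ∃ A : Assignment S, Complies S F A ∧ ∀ X : S.U, A (Sum.inl X) = u X := by
  obtain ⟨lt, hsto, hdep⟩ := hF
  haveI := hsto.toIsTrans
  haveI := hsto.toIrrefl
  have wf : WellFounded lt := Finite.wellFounded_of_trans_of_irrefl lt
  exact ⟨buildSol F lt wf u, buildSol_complies F lt hsto hdep wf u, fun X => rfl⟩

lemma solve_spec {F : StructFns S} (hF : Recursive S F) (u : ExoSetting S) :
    Complies S F (solve S F u) ∧ ∀ X : S.U, solve S F u (Sum.inl X) = u X := by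
  have hex := solve_exists hF u
  rw [solve, dif_pos hex]
  exact hex.choose_spec

lemma solve_eq {F : StructFns S} (hF : Recursive S F) {A : Assignment S} {u : ExoSetting S}
    (hA : Complies S F A) (hexo : ∀ X : S.U, A (Sum.inl X) = u X) : solve S F u = A := by
  have hs := solve_spec hF u
  exact complies_unique hF hs.1 hA fun X => by rw [hs.2 X, hexo X]

end Soundness

section Soundness2

variable {S : Signature}

lemma sat_imp {F : StructFns S} {P : Priority S} {A : Assignment S} {φ ψ : Formula S} :
    Sat S F P A (φ.imp ψ) ↔ (Sat S F P A φ → Sat S F P A ψ) := by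
  show ¬(Sat S F P A φ ∧ ¬ Sat S F P A ψ) ↔ _
  tauto

lemma sat_iffF {F : StructFns S} {P : Priority S} {A : Assignment S} {φ ψ : Formula S} :
    Sat S F P A (φ.iffF ψ) ↔ (Sat S F P A φ ↔ Sat S F P A ψ) := by
  show (Sat S F P A (φ.imp ψ) ∧ Sat S F P A (ψ.imp φ)) ↔ _
  rw [sat_imp, sat_imp]
  tauto

lemma sat_topF {F : StructFns S} {P : Priority S} {A : Assignment S}
    (h : Nonempty (S.U ⊕ S.V)) : Sat S F P A (topF S h) := by
  show ¬ (_ ∧ ¬ _)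
  tauto

lemma sat_botF {F : StructFns S} {P : Priority S} {A : Assignment S}
    (h : Nonempty (S.U ⊕ S.V)) : ¬ Sat S F P A (botF S h) := by
  show ¬ (_ ∧ ¬ _)
  tauto

lemma sat_bigAnd {F : StructFns S} {P : Priority S} {A : Assignment S}
    {h : Nonempty (S.U ⊕ S.V)} {L : List (Formula S)} :
    Sat S F P A (bigAnd S h L) ↔ ∀ ψ ∈ L, Sat S F P A ψ := by
  induction L with
  | nil => simpa [bigAnd] using sat_topF h
  | cons χ t ih =>
    show (Sat S F P A χ ∧ Sat S F P A (bigAnd S h t)) ↔ _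
    rw [ih]
    simp

lemma sat_bigOr {F : StructFns S} {P : Priority S} {A : Assignment S}
    {h : Nonempty (S.U ⊕ S.V)} {L : List (Formula S)} :
    Sat S F P A (bigOr S h L) ↔ ∃ ψ ∈ L, Sat S F P A ψ := by
  induction L with
  | nil => simpa [bigOr] using sat_botF h
  | cons χ t ih =>
    show ¬(¬ Sat S F P A χ ∧ ¬ Sat S F P A (bigOr S h t)) ↔ _
    rw [not_and_or, not_not, not_not, ih]
    simp

lemma fsts_append {l₁ l₂ : Ivn S} : Ivn.fsts (l₁ ++ l₂) = Ivn.fsts l₁ ++ Ivn.fsts l₂ :=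
  List.map_append

lemma distinct_iff {l : Ivn S} : Ivn.Distinct l ↔ (Ivn.fsts l).Nodup := Iff.rfl

lemma distinct_snoc_swap {l : Ivn S} {Y : S.V} {y y' : S.R (Sum.inr Y)}
    (h : Ivn.Distinct (l ++ [⟨Y, y⟩])) : Ivn.Distinct (l ++ [⟨Y, y'⟩]) := by
  rw [distinct_iff, fsts_append] at h ⊢
  exact h

lemma distinct_snoc_of {l : Ivn S} {Y : S.V} {y : S.R (Sum.inr Y)}
    (hl : Ivn.Distinct l) (hY : Y ∉ Ivn.fsts l) : Ivn.Distinct (l ++ [⟨Y, y⟩]) := by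
  rw [distinct_iff, fsts_append]
  simp only [Ivn.fsts, List.map_cons, List.map_nil]
  rw [List.nodup_append]
  refine ⟨hl, List.nodup_singleton _, ?_⟩
  intro a ha b hb hab
  simp only [List.mem_singleton] at hb
  subst hb hab
  exact hY ha

/-- Agreement below `Y` of the solutions for interventions differing only in the
value assigned to `Y`. -/
lemma solve_agree {F : StructFns S} {lt : (S.U ⊕ S.V) → (S.U ⊕ S.V) → Prop}
    (hsto : IsStrictTotalOrder (S.U ⊕ S.V) lt)
    (hdep : ∀ X : S.V, ∀ B B' : CoAssignment S (Sum.inr X),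
      (∀ Y (hne : Y ≠ Sum.inr X), lt Y (Sum.inr X) → B Y hne = B' Y hne) → F X B = F X B')
    {l : Ivn S} {Y : S.V} {y y' : S.R (Sum.inr Y)}
    (hdist : Ivn.Distinct (l ++ [⟨Y, y⟩])) (u : ExoSetting S) :
    ∀ W, lt W (Sum.inr Y) →
      solve S (applyIvn S F (l ++ [⟨Y, y⟩])) u W =
      solve S (applyIvn S F (l ++ [⟨Y, y'⟩])) u W := by
  haveI := hsto.toIsTrans
  haveI := hsto.toIrrefl
  have wf : WellFounded lt := Finite.wellFounded_of_trans_of_irrefl lt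
  have hF : Recursive S F := ⟨lt, hsto, hdep⟩
  have hdist' : Ivn.Distinct (l ++ [⟨Y, y'⟩]) := distinct_snoc_swap hdist
  set F₁ := applyIvn S F (l ++ [⟨Y, y⟩]) with hF₁
  set F₂ := applyIvn S F (l ++ [⟨Y, y'⟩]) with hF₂
  have hs₁ := solve_spec (recursive_applyIvn hF (l ++ [⟨Y, y⟩])) u
  have hs₂ := solve_spec (recursive_applyIvn hF (l ++ [⟨Y, y'⟩])) u
  set A₁ := solve S F₁ u with hA₁
  set A₂ := solve S F₂ u with hA₂
  intro W
  induction W using WellFounded.induction wf with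
  | _ W ih =>
    intro hW
    cases W with
    | inl a => rw [hs₁.2 a, hs₂.2 a]
    | inr V =>
      have hVY : V ≠ Y := by
        rintro rfl
        exact absurd hW (irrefl _)
      rw [hs₁.1 V, hs₂.1 V]
      by_cases hmem : ∃ x, (⟨V, x⟩ : (Z : S.V) × S.R (Sum.inr Z)) ∈ l
      · obtain ⟨x, hx⟩ := hmem
        rw [applyIvn_mem F hdist (List.mem_append_left _ hx),
          applyIvn_mem F hdist' (List.mem_append_left _ hx)]
      · have hV₁ : V ∉ Ivn.fsts (l ++ [⟨Y, y⟩]) := by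
          rw [fsts_append]
          intro hc
          rcases List.mem_append.1 hc with hc | hc
          · exact hmem (mem_fsts_iff.1 hc)
          · simp only [Ivn.fsts, List.map_cons, List.map_nil, List.mem_singleton] at hc
            exact hVY hc
        have hV₂ : V ∉ Ivn.fsts (l ++ [⟨Y, y'⟩]) := by
          rw [fsts_append]
          intro hc
          rcases List.mem_append.1 hc with hc | hc
          · exact hmem (mem_fsts_iff.1 hc)
          · simp only [Ivn.fsts, List.map_cons, List.map_nil, List.mem_singleton] at hc
            exact hVY hc
        rw [applyIvn_not_mem F hV₁, applyIvn_not_mem F hV₂]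
        exact hdep V _ _ fun Z hne hlt => ih Z hlt (Trans.trans hlt hW)

lemma influence_lt {F : StructFns S} {P : Priority S} {A : Assignment S}
    {lt : (S.U ⊕ S.V) → (S.U ⊕ S.V) → Prop}
    (hsto : IsStrictTotalOrder (S.U ⊕ S.V) lt)
    (hdep : ∀ X : S.V, ∀ B B' : CoAssignment S (Sum.inr X),
      (∀ Y (hne : Y ≠ Sum.inr X), lt Y (Sum.inr X) → B Y hne = B' Y hne) → F X B = F X B')
    {Y Z : S.V} {ψ : Formula S} (hψ : ψ ∈ InfluenceConjuncts S Y Z)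
    (hsat : Sat S F P A ψ) : lt (Sum.inr Y) (Sum.inr Z) := by
  obtain ⟨l, y, y', z, z', hdist, hZl, hZY, hyy', hzz', rfl⟩ := hψ
  obtain ⟨h₁, h₂⟩ := hsat
  simp only [Sat] at h₁ h₂
  rcases trichotomous_of lt (Sum.inr Y) (Sum.inr Z) with h | h | h
  · exact h
  · exact absurd (Sum.inr.inj h.symm) hZY
  · exfalso
    apply hzz'
    have := solve_agree (y' := y') hsto hdep hdist (fun X => A (Sum.inl X)) (Sum.inr Z) h
    rw [← h₁, ← h₂, this]

end Soundness2

lemma decideSat_neg {S : Signature} (F : StructFns S) (P : Priority S) (A : Assignment S)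
    (ψ : Formula S) :
    @decide (Sat S F P A (.neg ψ)) (Classical.propDecidable _) =
    !@decide (Sat S F P A ψ) (Classical.propDecidable _) := by
  by_cases h : Sat S F P A ψ
  · rw [@decide_eq_true _ (Classical.propDecidable _) h, @decide_eq_false _
      (Classical.propDecidable _) (show ¬ Sat S F P A (.neg ψ) from not_not_intro h)]
    rfl
  · rw [@decide_eq_false _ (Classical.propDecidable _) h, @decide_eq_true _
      (Classical.propDecidable _) (show Sat S F P A (.neg ψ) from h)]
    rfl

lemma decideSat_and {S : Signature} (F : StructFns S) (P : Priority S) (A : Assignment S)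
    (ψ χ : Formula S) :
    @decide (Sat S F P A (.and ψ χ)) (Classical.propDecidable _) =
    (@decide (Sat S F P A ψ) (Classical.propDecidable _) &&
     @decide (Sat S F P A χ) (Classical.propDecidable _)) := by
  by_cases h1 : Sat S F P A ψ <;> by_cases h2 : Sat S F P A χ
  · rw [@decide_eq_true _ (Classical.propDecidable _) h1,
      @decide_eq_true _ (Classical.propDecidable _) h2,
      @decide_eq_true _ (Classical.propDecidable _) (show Sat S F P A (.and ψ χ) from ⟨h1, h2⟩)]
    rfl
  · rw [@decide_eq_true _ (Classical.propDecidable _) h1,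
      @decide_eq_false _ (Classical.propDecidable _) h2,
      @decide_eq_false _ (Classical.propDecidable _)
        (show ¬ Sat S F P A (.and ψ χ) from fun hc => h2 hc.2)]
    rfl
  · rw [@decide_eq_false _ (Classical.propDecidable _) h1,
      @decide_eq_true _ (Classical.propDecidable _) h2,
      @decide_eq_false _ (Classical.propDecidable _)
        (show ¬ Sat S F P A (.and ψ χ) from fun hc => h1 hc.1)]
    rfl
  · rw [@decide_eq_false _ (Classical.propDecidable _) h1,
      @decide_eq_false _ (Classical.propDecidable _) h2,
      @decide_eq_false _ (Classical.propDecidable _)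
        (show ¬ Sat S F P A (.and ψ χ) from fun hc => h1 hc.1)]
    rfl

theorem sound_aux {S : Signature} {φ : Formula S} (h : Deriv S φ) :
    ∀ (F : StructFns S) (P : Priority S) (A : Assignment S),
      Recursive S F → P.Strict → Complies S F A → Sat S F P A φ := by
  induction h with
  | taut φ ht =>
    intro F P A hF hP hA
    refine @of_decide_eq_true _ (Classical.propDecidable _)
      (ht (fun ψ => @decide (Sat S F P A ψ) (Classical.propDecidable _)) ?_ ?_)
    · exact fun ψ => decideSat_neg F P A ψ
    · exact fun ψ χ => decideSat_and F P A ψ χ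
  | mp φ ψ himp hφ ihimp ihφ =>
    intro F P A hF hP hA
    exact sat_imp.1 (ihimp F P A hF hP hA) (ihφ F P A hF hP hA)
  | necI l hl φ hφ ih =>
    intro F P A hF hP hA
    simp only [Sat]
    have hF' := recursive_applyIvn hF l
    exact ih _ P _ hF' hP (solve_spec hF' _).1
  | necC u φ hφ ih =>
    intro F P A hF hP hA
    simp only [Sat]
    exact ih F P _ hF hP (solve_spec hF u).1
  | ax1 l hl Y y y' hyy' =>
    intro F P A hF hP hA
    rw [sat_imp]
    intro h1
    simp only [Sat] at h1 ⊢
    intro hc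
    exact hyy' (h1.symm.trans hc)
  | ax2 l hl Y =>
    intro F P A hF hP hA
    rw [sat_bigOr]
    refine ⟨Formula.intervene l (.atom (Sum.inr Y)
      (solve S (applyIvn S F l) (fun X => A (Sum.inl X)) (Sum.inr Y))), ?_, ?_⟩
    · exact List.mem_map_of_mem (Finset.mem_toList.2 (Finset.mem_univ _))
    · simp only [Sat]
  | ax3 l hl Y hY y Z hZ hZY z =>
    intro F P A hF hP hA
    rw [sat_imp]
    intro hand
    simp only [Sat] at hand ⊢
    obtain ⟨h1, h2⟩ := hand
    set u := fun X => A (Sum.inl X) with hu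
    have hF₁ := recursive_applyIvn hF l
    have hs₁ := solve_spec hF₁ u
    have hdist2 : Ivn.Distinct (l ++ [⟨Y, y⟩]) := distinct_snoc_of hl hY
    have hF₂ := recursive_applyIvn hF (l ++ [⟨Y, y⟩])
    have hcomp : Complies S (applyIvn S F (l ++ [⟨Y, y⟩])) (solve S (applyIvn S F l) u) := by
      intro V
      by_cases hmem : ∃ x, (⟨V, x⟩ : (W : S.V) × S.R (Sum.inr W)) ∈ l
      · obtain ⟨x, hx⟩ := hmem
        rw [applyIvn_mem F hdist2 (List.mem_append_left _ hx), hs₁.1 V,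
          applyIvn_mem F hl hx]
      · by_cases hVY : V = Y
        · subst hVY
          rw [applyIvn_mem F hdist2 (List.mem_append_right _ (List.mem_singleton_self _))]
          exact h1
        · have hV : V ∉ Ivn.fsts (l ++ [⟨Y, y⟩]) := by
            rw [fsts_append]
            intro hc
            rcases List.mem_append.1 hc with hc | hc
            · exact hmem (mem_fsts_iff.1 hc)
            · simp only [Ivn.fsts, List.map_cons, List.map_nil, List.mem_singleton] at hc
              exact hVY hc
          rw [applyIvn_not_mem F hV, hs₁.1 V,
            applyIvn_not_mem F (fun hc => hmem (mem_fsts_iff.1 hc))]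
    rw [solve_eq hF₂ hcomp hs₁.2]
    exact h2
  | ax4 l Y y hdist =>
    intro F P A hF hP hA
    simp only [Sat]
    have hF₂ := recursive_applyIvn hF (l ++ [⟨Y, y⟩])
    have hs := solve_spec hF₂ (fun X => A (Sum.inl X))
    rw [hs.1 Y, applyIvn_mem F hdist (List.mem_append_right _ (List.mem_singleton_self _))]
  | ax5 k X hinj L hL hLast =>
    intro F P A hF hP hA
    rw [sat_imp]
    intro hand
    obtain ⟨lt, hsto, hdep⟩ := hF
    haveI := hsto.toIsTrans
    haveI := hsto.toIrrefl
    show ¬ Sat S F P A (bigOr S ⟨Sum.inr (X 0)⟩ (L (Fin.last k)))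
    rw [sat_bigOr]
    rintro ⟨ψ, hmem, hsat⟩
    have hlast : lt (Sum.inr (X (Fin.last k))) (Sum.inr (X 0)) :=
      influence_lt hsto hdep ((hLast ψ).1 hmem) hsat
    have hchain : ∀ i : Fin k, lt (Sum.inr (X i.castSucc)) (Sum.inr (X i.succ)) := by
      intro i
      have hbig := (sat_bigAnd.1 hand) _
        (List.mem_ofFn.2 ⟨i, rfl⟩)
      obtain ⟨ψ', hmem', hsat'⟩ := sat_bigOr.1 hbig
      exact influence_lt hsto hdep ((hL i ψ').1 hmem') hsat'
    have key : ∀ m : ℕ, ∀ hm : m < k + 1,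
        (⟨m, hm⟩ : Fin (k+1)) = 0 ∨ lt (Sum.inr (X 0)) (Sum.inr (X ⟨m, hm⟩)) := by
      intro m
      induction m with
      | zero => intro hm; left; rfl
      | succ n ihn =>
        intro hm
        have hn : n < k + 1 := Nat.lt_of_succ_lt hm
        have hnk : n < k := Nat.lt_of_succ_lt_succ hm
        have hstep : lt (Sum.inr (X ⟨n, hn⟩)) (Sum.inr (X ⟨n+1, hm⟩)) := hchain ⟨n, hnk⟩
        rcases ihn hn with h0 | hlt
        · right; rw [← h0]; exact hstep
        · right; exact Trans.trans hlt hstep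
    rcases key k (Nat.lt_succ_self k) with h0 | hlt
    · rw [show Fin.last k = (⟨k, Nat.lt_succ_self k⟩ : Fin (k+1)) from rfl, h0] at hlast
      exact absurd hlast (irrefl _)
    · exact absurd (Trans.trans hlt hlast) (irrefl _)
  | axNeg l hl φ =>
    intro F P A hF hP hA
    rw [sat_iffF]
    simp only [Sat]
  | axAnd l hl φ ψ =>
    intro F P A hF hP hA
    rw [sat_iffF]
    simp only [Sat]
  | axComp l₁ l₂ h₁ h₂ φ =>
    intro F P A hF hP hA
    rw [sat_iffF]
    set u := fun X => A (Sum.inl X) with hu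
    have hF₁ := recursive_applyIvn hF l₁
    have hs₁ := solve_spec hF₁ u
    have hmerge : Ivn.Distinct (mergeIvn l₁ l₂) := by
      rw [distinct_iff, mergeIvn, fsts_append, List.nodup_append]
      refine ⟨?_, h₂, ?_⟩
      · exact ((List.filter_sublist (l := l₁)).map Sigma.fst).nodup h₁
      · intro a ha b hb hab
        subst hab
        obtain ⟨x, hx⟩ := mem_fsts_iff.1 ha
        exact (of_decide_eq_true (List.mem_filter.1 hx).2) hb
    have hfun : applyIvn S (applyIvn S F l₁) l₂ = applyIvn S F (mergeIvn l₁ l₂) := by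
      funext V B
      by_cases hm2 : ∃ x, (⟨V, x⟩ : (W : S.V) × S.R (Sum.inr W)) ∈ l₂
      · obtain ⟨x, hx⟩ := hm2
        rw [applyIvn_mem _ h₂ hx, applyIvn_mem F hmerge (List.mem_append_right _ hx)]
      · have hV2 : V ∉ Ivn.fsts l₂ := fun hc => hm2 (mem_fsts_iff.1 hc)
        rw [applyIvn_not_mem _ hV2]
        by_cases hm1 : ∃ x, (⟨V, x⟩ : (W : S.V) × S.R (Sum.inr W)) ∈ l₁
        · obtain ⟨x, hx⟩ := hm1
          have hxm : (⟨V, x⟩ : (W : S.V) × S.R (Sum.inr W)) ∈ mergeIvn l₁ l₂ :=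
            List.mem_append_left _ (List.mem_filter.2 ⟨hx, decide_eq_true hV2⟩)
          rw [applyIvn_mem F h₁ hx, applyIvn_mem F hmerge hxm]
        · have hV1 : V ∉ Ivn.fsts l₁ := fun hc => hm1 (mem_fsts_iff.1 hc)
          have hVm : V ∉ Ivn.fsts (mergeIvn l₁ l₂) := by
            rw [mergeIvn, fsts_append]
            intro hc
            rcases List.mem_append.1 hc with hc | hc
            · obtain ⟨x, hx⟩ := mem_fsts_iff.1 hc
              exact hm1 ⟨x, (List.mem_filter.1 hx).1⟩
            · exact hV2 hc
          rw [applyIvn_not_mem F hV1, applyIvn_not_mem F hVm]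
    simp only [Sat]
    rw [show (fun X => solve S (applyIvn S F l₁) u (Sum.inl X)) = u from funext hs₁.2, hfun]
  | axAsym X x Y y =>
    intro F P A hF hP hA
    rw [sat_imp]
    intro h1
    simp only [Sat] at h1 ⊢
    exact hP.1 _ _ h1
  | axTrans X x Y y Z z =>
    intro F P A hF hP hA
    rw [sat_imp]
    intro h12
    simp only [Sat] at h12 ⊢
    exact hP.2 _ _ _ h12.1 h12.2
  | gAnd u φ ψ =>
    intro F P A hF hP hA
    rw [sat_iffF]
    simp only [Sat]
  | gNeg u φ =>
    intro F P A hF hP hA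
    rw [sat_iffF]
    simp only [Sat]
  | gCtx u u' φ =>
    intro F P A hF hP hA
    rw [sat_iffF]
    simp only [Sat]
  | gInt u l hl φ =>
    intro F P A hF hP hA
    rw [sat_iffF]
    simp only [Sat]
    have hs := solve_spec hF u
    rw [show (fun X => solve S F u (Sum.inl X)) = u from funext hs.2]
  | selfAx hne u =>
    intro F P A hF hP hA
    simp only [Sat]
    rw [exoConj, sat_bigAnd]
    intro ψ hmem
    obtain ⟨X, hX, rfl⟩ := List.mem_map.1 hmem
    simp only [Sat]
    exact (solve_spec hF u).2 X
  | inclAx hne u φ =>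
    intro F P A hF hP hA
    rw [sat_imp]
    intro h12
    simp only [Sat] at h12 ⊢
    obtain ⟨hconj, hφ⟩ := h12
    rw [exoConj] at hconj
    have hexo : ∀ X : S.U, A (Sum.inl X) = u X := by
      intro X
      exact sat_bigAnd.1 hconj (Formula.atom (Sum.inl X) (u X))
        (List.mem_map_of_mem (Finset.mem_toList.2 (Finset.mem_univ X)))
    rw [solve_eq hF hA hexo]
    exact hφ

/-- soundness of CIO: every formula of the language `L_D` that is
derivable in the calculus CIO is valid in every causal deontic model. -/
theorem CIO_sound (S : Signature) (φ : Formula S) (h : Deriv S φ) :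
    ∀ M : CDModel S, M.Sat φ := by
  intro M
  exact sound_aux h M.F M.P M.A M.recF M.strictP M.compliesA
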